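/- arXiv:1909.10465 — 2 statements merged into one kernel-verified Lean document; each statement's English description precedes it below -/
import Mathlib

section
/- Let 𝒩 ⊆ 𝒜. Then 𝒩 = 𝒩(m) for some finitely additive probability m on 𝒜 if and only if 𝒩 is a proper ideal of sets in 𝒜 and 𝒜 admits a representation 𝒜 = 𝒩 ∪ ⋃_{n∈ℕ} 𝓑ₙ with I_𝒩(𝓑ₙ) > 0 for every n, where I_𝒩(𝓑) = inf over nonempty finite sequences β of elements of 𝓑 and over N ∈ 𝒩 of sup_{ω ∈ Ω \ N} s(β)(ω). -/
/-- An algebra of subsets of `Ω`: contains `∅` and `univ`, closed under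
complements and finite unions. -/
def IsSetAlgebra {Ω : Type*} (𝒜 : Set (Set Ω)) : Prop :=
  ∅ ∈ 𝒜 ∧ Set.univ ∈ 𝒜 ∧ (∀ A ∈ 𝒜, Aᶜ ∈ 𝒜) ∧ ∀ A ∈ 𝒜, ∀ B ∈ 𝒜, A ∪ B ∈ 𝒜

/-- A finitely additive probability on the algebra `𝒜`. -/
def IsFAProb {Ω : Type*} (𝒜 : Set (Set Ω)) (m : Set Ω → ℝ) : Prop :=
  (∀ A ∈ 𝒜, 0 ≤ m A) ∧ m Set.univ = 1 ∧
    ∀ A ∈ 𝒜, ∀ B ∈ 𝒜, Disjoint A B → m (A ∪ B) = m A + m B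

/-- `sFun β = (1/|β|) ∑_{B ∈ β} 1_B` for a finite sequence (list) of sets `β`. -/
noncomputable def sFun {Ω : Type*} (β : List (Set Ω)) : Ω → ℝ := fun ω =>
  (β.map fun B => B.indicator (fun _ => (1 : ℝ)) ω).sum / β.length

/-- `𝒩` is an ideal of sets inside the algebra `𝒜`. -/
def IsIdealIn {Ω : Type*} (𝒜 𝒩 : Set (Set Ω)) : Prop :=
  𝒩 ⊆ 𝒜 ∧ ∅ ∈ 𝒩 ∧ (∀ A ∈ 𝒩, ∀ B ∈ 𝒩, A ∪ B ∈ 𝒩) ∧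
    ∀ A ∈ 𝒩, ∀ B ∈ 𝒜, B ⊆ A → B ∈ 𝒩

/-- `I_𝒩(𝓑) = inf over nonempty finite sequences β from 𝓑 and N ∈ 𝒩 of
`sup_{ω ∈ Ω \ N} s(β)(ω)`. -/
noncomputable def interNumIdeal {Ω : Type*} (𝒩 𝓑 : Set (Set Ω)) : ℝ :=
  sInf {r | ∃ β : List (Set Ω), β ≠ [] ∧ (∀ B ∈ β, B ∈ 𝓑) ∧
    ∃ N ∈ 𝒩, r = sSup (sFun β '' Nᶜ)}


namespace NullIdealAux

variable {Ω : Type*} {𝒜 : Set (Set Ω)} {m : Set Ω → ℝ}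

theorem alg_inter (h : IsSetAlgebra 𝒜) {A B : Set Ω} (hA : A ∈ 𝒜) (hB : B ∈ 𝒜) :
    A ∩ B ∈ 𝒜 := by
  have : A ∩ B = (Aᶜ ∪ Bᶜ)ᶜ := by simp [Set.compl_union]
  rw [this]
  exact h.2.2.1 _ (h.2.2.2 _ (h.2.2.1 _ hA) _ (h.2.2.1 _ hB))

theorem alg_diff (h : IsSetAlgebra 𝒜) {A B : Set Ω} (hA : A ∈ 𝒜) (hB : B ∈ 𝒜) :
    A \ B ∈ 𝒜 := alg_inter h hA (h.2.2.1 _ hB)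

theorem fa_empty (h : IsSetAlgebra 𝒜) (hm : IsFAProb 𝒜 m) : m ∅ = 0 := by
  have := hm.2.2 ∅ h.1 ∅ h.1 (by simp)
  simpa using this.symm

theorem fa_mono (h : IsSetAlgebra 𝒜) (hm : IsFAProb 𝒜 m) {A B : Set Ω}
    (hA : A ∈ 𝒜) (hB : B ∈ 𝒜) (hsub : A ⊆ B) : m A ≤ m B := by
  have hd : B \ A ∈ 𝒜 := alg_diff h hB hA
  have : m (A ∪ B \ A) = m A + m (B \ A) :=
    hm.2.2 A hA _ hd (Set.disjoint_sdiff_right.mono_left le_rfl)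
  rw [Set.union_diff_cancel hsub] at this
  have := hm.1 _ hd
  linarith

theorem fa_le_one (h : IsSetAlgebra 𝒜) (hm : IsFAProb 𝒜 m) {A : Set Ω} (hA : A ∈ 𝒜) :
    m A ≤ 1 := by
  have := fa_mono h hm hA h.2.1 (Set.subset_univ A)
  rw [hm.2.1] at this; exact this

theorem fa_union_le (h : IsSetAlgebra 𝒜) (hm : IsFAProb 𝒜 m) {A B : Set Ω}
    (hA : A ∈ 𝒜) (hB : B ∈ 𝒜) : m (A ∪ B) ≤ m A + m B := by
  have hd : B \ A ∈ 𝒜 := alg_diff h hB hA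
  have h1 : m (A ∪ B \ A) = m A + m (B \ A) :=
    hm.2.2 A hA _ hd (Set.disjoint_sdiff_right.mono_left le_rfl)
  rw [Set.union_diff_self] at h1
  have h2 : m (B \ A) ≤ m B := fa_mono h hm hd hB Set.diff_subset
  linarith

theorem fa_incl_excl (h : IsSetAlgebra 𝒜) (hm : IsFAProb 𝒜 m) {A B : Set Ω}
    (hA : A ∈ 𝒜) (hB : B ∈ 𝒜) : m (A ∪ B) + m (A ∩ B) = m A + m B := by
  have hd : B \ A ∈ 𝒜 := alg_diff h hB hA
  have hi : A ∩ B ∈ 𝒜 := alg_inter h hA hB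
  have h1 : m (A ∪ B \ A) = m A + m (B \ A) :=
    hm.2.2 A hA _ hd (Set.disjoint_sdiff_right.mono_left le_rfl)
  rw [Set.union_diff_self] at h1
  have h2 : m ((A ∩ B) ∪ (B \ A)) = m (A ∩ B) + m (B \ A) := by
    refine hm.2.2 _ hi _ hd ?_
    exact Set.disjoint_sdiff_right.mono_left Set.inter_subset_left
  have h3 : (A ∩ B) ∪ (B \ A) = B := by
    ext ω; by_cases hω : ω ∈ A <;> simp [hω]
  rw [h3] at h2
  linarith



noncomputable def cnt {Ω : Type*} (β : List (Set Ω)) (ω : Ω) : ℝ :=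
  (β.map fun B => B.indicator (fun _ => (1 : ℝ)) ω).sum

def lev {Ω : Type*} (j : ℕ) (β : List (Set Ω)) : Set Ω := {ω | (j : ℝ) ≤ cnt β ω}

variable {Ω : Type*} {𝒜 : Set (Set Ω)} {m : Set Ω → ℝ}

theorem cnt_nil (ω : Ω) : cnt ([] : List (Set Ω)) ω = 0 := by simp [cnt]

theorem cnt_cons (B : Set Ω) (γ : List (Set Ω)) (ω : Ω) :
    cnt (B :: γ) ω = B.indicator (fun _ => (1 : ℝ)) ω + cnt γ ω := by simp [cnt]

theorem cnt_nonneg (β : List (Set Ω)) (ω : Ω) : 0 ≤ cnt β ω := by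
  induction β with
  | nil => simp [cnt_nil]
  | cons B γ ih =>
    rw [cnt_cons]
    have : (0:ℝ) ≤ B.indicator (fun _ => (1:ℝ)) ω := Set.indicator_nonneg (by simp) ω
    linarith

theorem cnt_le_length (β : List (Set Ω)) (ω : Ω) : cnt β ω ≤ β.length := by
  induction β with
  | nil => simp [cnt_nil]
  | cons B γ ih =>
    rw [cnt_cons]
    have : B.indicator (fun _ => (1:ℝ)) ω ≤ 1 := by by_cases hω : ω ∈ B <;> simp [hω]
    simp only [List.length_cons]
    push_cast
    linarith

theorem lev_zero (β : List (Set Ω)) : lev 0 β = Set.univ := by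
  ext ω; simp [lev, cnt_nonneg]

theorem lev_antitone (j : ℕ) (β : List (Set Ω)) : lev (j+1) β ⊆ lev j β := by
  intro ω hω
  simp only [lev, Set.mem_setOf_eq] at hω ⊢
  push_cast at hω ⊢
  linarith

theorem lev_cons (j : ℕ) (B : Set Ω) (γ : List (Set Ω)) :
    lev (j+1) (B :: γ) = lev (j+1) γ ∪ (B ∩ lev j γ) := by
  ext ω
  by_cases hω : ω ∈ B <;>
    simp only [lev, Set.mem_setOf_eq, Set.mem_union, Set.mem_inter_iff, cnt_cons, hω,
      Set.indicator_of_mem, Set.indicator_of_notMem, not_false_iff] <;> push_cast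
  · constructor
    · intro h
      by_cases h2 : (j:ℝ) + 1 ≤ cnt γ ω
      · exact Or.inl h2
      · exact Or.inr ⟨trivial, by linarith⟩
    · rintro (h | ⟨-, h⟩) <;> linarith
  · constructor
    · intro h; exact Or.inl (by linarith)
    · rintro (h | ⟨h, -⟩)
      · linarith
      · exact h.elim

theorem lev_empty (j : ℕ) (β : List (Set Ω)) (hj : β.length < j + 1) :
    lev (j+1) β = ∅ := by
  ext ω
  simp only [lev, Set.mem_setOf_eq, Set.mem_empty_iff_false, iff_false, not_le]
  have := cnt_le_length β ω
  have : (β.length : ℝ) < (j:ℝ) + 1 := by exact_mod_cast hj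
  have := cnt_le_length β ω
  push_cast
  linarith

theorem lev_mem_alg (h : IsSetAlgebra 𝒜) (β : List (Set Ω)) (hβ : ∀ B ∈ β, B ∈ 𝒜)
    (j : ℕ) : lev j β ∈ 𝒜 := by
  induction β generalizing j with
  | nil =>
    cases j with
    | zero => rw [lev_zero]; exact h.2.1
    | succ j => rw [lev_empty j [] (by simp)]; exact h.1
  | cons B γ ih =>
    have hB : B ∈ 𝒜 := hβ B (List.mem_cons_self)
    have hγ : ∀ C ∈ γ, C ∈ 𝒜 := fun C hC => hβ C (List.mem_cons_of_mem _ hC)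
    cases j with
    | zero => rw [lev_zero]; exact h.2.1
    | succ j =>
      rw [lev_cons]
      exact h.2.2.2 _ (ih hγ (j+1)) _ (alg_inter h hB (ih hγ j))

theorem fa_sum_eq_lev (h : IsSetAlgebra 𝒜) (hm : IsFAProb 𝒜 m)
    (β : List (Set Ω)) (hβ : ∀ B ∈ β, B ∈ 𝒜) :
    (β.map m).sum = ∑ j ∈ Finset.range β.length, m (lev (j+1) β) := by
  induction β with
  | nil => simp
  | cons B γ ih =>
    have hB : B ∈ 𝒜 := hβ B (List.mem_cons_self)
    have hγ : ∀ C ∈ γ, C ∈ 𝒜 := fun C hC => hβ C (List.mem_cons_of_mem _ hC)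
    have hlev : ∀ j, lev j γ ∈ 𝒜 := lev_mem_alg h γ hγ
    have key : ∀ j : ℕ, m (lev (j+1) (B :: γ)) =
        m (lev (j+1) γ) + (m (B ∩ lev j γ) - m (B ∩ lev (j+1) γ)) := by
      intro j
      rw [lev_cons]
      have hIE := fa_incl_excl h hm (hlev (j+1)) (alg_inter h hB (hlev j))
      have hXY : lev (j+1) γ ∩ (B ∩ lev j γ) = B ∩ lev (j+1) γ := by
        ext ω
        simp only [Set.mem_inter_iff]
        constructor
        · rintro ⟨h1, h2, h3⟩; exact ⟨h2, h1⟩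
        · rintro ⟨h1, h2⟩; exact ⟨h2, h1, lev_antitone j γ h2⟩
      rw [hXY] at hIE
      linarith
    simp only [List.map_cons, List.sum_cons, List.length_cons]
    rw [ih hγ, Finset.sum_congr rfl (fun j _ => key j), Finset.sum_add_distrib,
      Finset.sum_range_sub']
    have h1 : lev (γ.length + 1) γ = ∅ := lev_empty _ _ (by omega)
    have h2 : B ∩ lev 0 γ = B := by rw [lev_zero, Set.inter_univ]
    rw [Finset.sum_range_succ, h1, fa_empty h hm, h2, Set.inter_empty, fa_empty h hm]
    ring

end NullIdealAux

namespace NullIdealAux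

variable {Ω : Type*} {𝒜 𝒩 : Set (Set Ω)} {m : Set Ω → ℝ}

theorem sFun_eq (β : List (Set Ω)) (ω : Ω) : sFun β ω = cnt β ω / β.length := rfl

theorem sFun_nonneg (β : List (Set Ω)) (ω : Ω) : 0 ≤ sFun β ω :=
  div_nonneg (cnt_nonneg β ω) (by positivity)

theorem sFun_le_one (β : List (Set Ω)) (ω : Ω) : sFun β ω ≤ 1 := by
  rcases Nat.eq_zero_or_pos β.length with h | h
  · simp [sFun_eq, h]
  · rw [sFun_eq, div_le_one (by exact_mod_cast h)]
    exact cnt_le_length β ω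

theorem list_sum_ge (ε : ℝ) (β : List (Set Ω)) (hβ : ∀ B ∈ β, ε ≤ m B) :
    ε * β.length ≤ (β.map m).sum := by
  induction β with
  | nil => simp
  | cons B γ ih =>
    have h1 : ε ≤ m B := hβ B (List.mem_cons_self)
    have h2 := ih fun C hC => hβ C (List.mem_cons_of_mem _ hC)
    simp only [List.map_cons, List.sum_cons, List.length_cons]
    push_cast
    linarith

theorem fwd_sup_ge (h : IsSetAlgebra 𝒜) (hm : IsFAProb 𝒜 m) {ε : ℝ} (hε : 0 < ε)
    (β : List (Set Ω)) (hne : β ≠ []) (hβ : ∀ B ∈ β, B ∈ 𝒜 ∧ ε ≤ m B)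
    {N : Set Ω} (hN : N ∈ 𝒜) (hN0 : m N = 0) :
    ε ≤ sSup (sFun β '' Nᶜ) := by
  have hk : 0 < β.length := List.length_pos_iff.mpr hne
  have hkR : (0:ℝ) < β.length := by exact_mod_cast hk
  -- Nᶜ nonempty
  have hNc : Nᶜ.Nonempty := by
    rcases Set.eq_empty_or_nonempty Nᶜ with he | hne2
    · exfalso
      have : N = Set.univ := by
        rw [← Set.compl_empty_iff]; exact he
      rw [this, hm.2.1] at hN0; linarith
    · exact hne2
  set r := sSup (sFun β '' Nᶜ) with hr
  have hbdd : BddAbove (sFun β '' Nᶜ) := by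
    refine ⟨1, ?_⟩
    rintro x ⟨ω, -, rfl⟩
    exact sFun_le_one β ω
  have hrmem : ∀ ω ∈ Nᶜ, sFun β ω ≤ r := fun ω hω => le_csSup hbdd ⟨ω, hω, rfl⟩
  have hr0 : 0 ≤ r := by
    obtain ⟨ω, hω⟩ := hNc
    exact le_trans (sFun_nonneg β ω) (hrmem ω hω)
  set j₀ := ⌊r * β.length⌋₊ with hj₀
  -- lev (j₀+1) β ⊆ N
  have hsub : lev (j₀+1) β ⊆ N := by
    intro ω hω
    by_contra hωN
    have h1 : sFun β ω ≤ r := hrmem ω hωN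
    have h2 : cnt β ω ≤ r * β.length := by
      rw [sFun_eq, div_le_iff₀ hkR] at h1; exact h1
    have h3 : ((j₀:ℝ) + 1) ≤ cnt β ω := by
      have := hω
      simp only [lev, Set.mem_setOf_eq] at this
      push_cast at this ⊢
      exact this
    have h4 : r * β.length < (j₀:ℝ) + 1 := by
      exact_mod_cast Nat.lt_floor_add_one (r * β.length)
    linarith
  have hβ𝒜 : ∀ B ∈ β, B ∈ 𝒜 := fun B hB => (hβ B hB).1
  have hsum := fa_sum_eq_lev h hm β hβ𝒜
  -- each term bound
  have hterm : ∀ j ∈ Finset.range β.length, m (lev (j+1) β) ≤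
      if j + 1 ≤ j₀ then 1 else 0 := by
    intro j _
    by_cases hj : j + 1 ≤ j₀
    · rw [if_pos hj]
      exact fa_le_one h hm (lev_mem_alg h β hβ𝒜 (j+1))
    · rw [if_neg hj]
      have hmono : lev (j+1) β ⊆ lev (j₀+1) β := by
        have hj' : j₀ + 1 ≤ j + 1 := by omega
        intro ω hω
        simp only [lev, Set.mem_setOf_eq] at hω ⊢
        have : ((j₀:ℝ) + 1) ≤ (j:ℝ) + 1 := by exact_mod_cast hj'
        push_cast at hω ⊢
        linarith
      calc m (lev (j+1) β) ≤ m N :=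
            fa_mono h hm (lev_mem_alg h β hβ𝒜 (j+1)) hN (hmono.trans hsub)
        _ = 0 := hN0
  have hcount : ∑ j ∈ Finset.range β.length, (if j + 1 ≤ j₀ then (1:ℝ) else 0) ≤ j₀ := by
    calc ∑ j ∈ Finset.range β.length, (if j + 1 ≤ j₀ then (1:ℝ) else 0)
        ≤ ∑ j ∈ Finset.range β.length, (if j < j₀ then (1:ℝ) else 0) := by
          refine Finset.sum_le_sum fun j _ => ?_
          by_cases hj : j + 1 ≤ j₀ <;> simp [hj, Nat.lt_iff_add_one_le]
      _ ≤ ∑ j ∈ Finset.range (max β.length j₀), (if j < j₀ then (1:ℝ) else 0) := by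
          refine Finset.sum_le_sum_of_subset_of_nonneg
            (Finset.range_subset_range.mpr (le_max_left _ _)) fun j _ _ => ?_
          positivity
      _ = ∑ j ∈ Finset.range j₀, (1:ℝ) := by
          rw [← Finset.sum_subset (Finset.range_subset_range.mpr (le_max_right β.length j₀))
            (fun j _ hj => if_neg (by simpa using hj))]
          exact Finset.sum_congr rfl fun j hj => if_pos (Finset.mem_range.mp hj)
      _ = j₀ := by simp
  have hfloorle : (j₀ : ℝ) ≤ r * β.length := Nat.floor_le (by positivity)
  have hlow : ε * β.length ≤ (β.map m).sum := list_sum_ge ε β fun B hB => (hβ B hB).2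
  have : ε * β.length ≤ r * β.length := by
    calc ε * β.length ≤ (β.map m).sum := hlow
      _ = ∑ j ∈ Finset.range β.length, m (lev (j+1) β) := hsum
      _ ≤ ∑ j ∈ Finset.range β.length, (if j + 1 ≤ j₀ then (1:ℝ) else 0) :=
          Finset.sum_le_sum hterm
      _ ≤ j₀ := hcount
      _ ≤ r * β.length := hfloorle
  exact le_of_mul_le_mul_right (by linarith [this]) hkR

end NullIdealAux

namespace NullIdealAux

variable {Ω : Type*} {𝒜 𝒩 : Set (Set Ω)} {m : Set Ω → ℝ}

theorem forward_dir (h : IsSetAlgebra 𝒜) (hm : IsFAProb 𝒜 m)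
    (h𝒩 : 𝒩 = {A ∈ 𝒜 | m A = 0}) :
    IsIdealIn 𝒜 𝒩 ∧ Set.univ ∉ 𝒩 ∧
      ∃ 𝓑 : ℕ → Set (Set Ω), (∀ n, 𝓑 n ⊆ 𝒜) ∧ (∀ n, 0 < interNumIdeal 𝒩 (𝓑 n)) ∧
        𝒜 = 𝒩 ∪ ⋃ n, 𝓑 n := by
  subst h𝒩
  have hmem : ∀ A, A ∈ {A ∈ 𝒜 | m A = 0} ↔ A ∈ 𝒜 ∧ m A = 0 := fun A => Iff.rfl
  refine ⟨⟨fun A hA => hA.1, ⟨h.1, fa_empty h hm⟩, ?_, ?_⟩, ?_, ?_⟩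
  · rintro A ⟨hA, hA0⟩ B ⟨hB, hB0⟩
    refine ⟨h.2.2.2 _ hA _ hB, le_antisymm ?_ (hm.1 _ (h.2.2.2 _ hA _ hB))⟩
    have := fa_union_le h hm hA hB
    linarith
  · rintro A ⟨hA, hA0⟩ B hB hsub
    refine ⟨hB, le_antisymm ?_ (hm.1 _ hB)⟩
    have := fa_mono h hm hB hA hsub
    linarith
  · rintro ⟨-, h1⟩
    rw [hm.2.1] at h1; linarith
  · refine ⟨fun n => {A ∈ 𝒜 | 1/(n+1:ℝ) ≤ m A}, fun n A hA => hA.1, fun n => ?_, ?_⟩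
    · have hεpos : (0:ℝ) < 1/(n+1:ℝ) := by positivity
      refine lt_of_lt_of_le hεpos (le_csInf ?_ ?_)
      · refine ⟨sSup (sFun [Set.univ] '' (∅ᶜ : Set Ω)), [Set.univ], by simp, ?_,
          ∅, ⟨h.1, fa_empty h hm⟩, rfl⟩
        intro B hB
        rw [List.mem_singleton] at hB
        subst hB
        refine ⟨h.2.1, ?_⟩
        rw [hm.2.1]
        rw [div_le_one (by positivity)]
        linarith [Nat.cast_nonneg (α := ℝ) n]
      · rintro r ⟨β, hne, hβ, N, hN, rfl⟩
        exact fwd_sup_ge h hm hεpos β hne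
          (fun B hB => ⟨(hβ B hB).1, (hβ B hB).2⟩) hN.1 hN.2
    · ext A
      simp only [Set.mem_union, Set.mem_iUnion, Set.mem_setOf_eq]
      constructor
      · intro hA
        by_cases h0 : m A = 0
        · exact Or.inl ⟨hA, h0⟩
        · have hpos : 0 < m A := lt_of_le_of_ne (hm.1 A hA) (Ne.symm h0)
          obtain ⟨n, hn⟩ := exists_nat_gt (1 / m A)
          refine Or.inr ⟨n, hA, ?_⟩
          rw [div_le_iff₀ (by positivity)]
          rw [div_lt_iff₀ hpos] at hn
          have : (n:ℝ) ≤ n + 1 := by linarith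
          nlinarith
      · rintro (hA | ⟨n, hA, -⟩)
        · exact hA.1
        · exact hA

end NullIdealAux

namespace NullIdealAux

variable {Ω : Type*}

def BddFns (Ω : Type*) : Submodule ℝ (Ω → ℝ) where
  carrier := {f | ∃ C, ∀ ω, |f ω| ≤ C}
  add_mem' := by
    rintro f g ⟨C, hC⟩ ⟨D, hD⟩
    exact ⟨C + D, fun ω => (abs_add_le _ _).trans (add_le_add (hC ω) (hD ω))⟩
  zero_mem' := ⟨0, by simp⟩
  smul_mem' := by
    rintro c f ⟨C, hC⟩
    exact ⟨|c| * C, fun ω => by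
      simp only [Pi.smul_apply, smul_eq_mul, abs_mul]
      exact mul_le_mul_of_nonneg_left (hC ω) (abs_nonneg c)⟩

noncomputable def indF (A : Set Ω) : BddFns Ω :=
  ⟨A.indicator fun _ => 1, 1, fun ω => by by_cases h : ω ∈ A <;> simp [h]⟩

open Pointwise in
def essSet (𝒩 : Set (Set Ω)) (f : BddFns Ω) : Set ℝ :=
  {r | ∃ N ∈ 𝒩, r = sSup (f.1 '' Nᶜ)}

noncomputable def ess (𝒩 : Set (Set Ω)) (f : BddFns Ω) : ℝ := sInf (essSet 𝒩 f)

variable [Nonempty Ω] {𝒩 : Set (Set Ω)}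

theorem hNc (hU : Set.univ ∉ 𝒩) {N : Set Ω} (hN : N ∈ 𝒩) : (Nᶜ : Set Ω).Nonempty := by
  rcases Set.eq_empty_or_nonempty Nᶜ with he | hne
  · exact absurd (Set.compl_empty_iff.mp he ▸ hN) hU
  · exact hne

theorem bdd_img (f : BddFns Ω) (s : Set Ω) : BddAbove (f.1 '' s) := by
  obtain ⟨C, hC⟩ := f.2
  exact ⟨C, by rintro x ⟨ω, -, rfl⟩; exact (abs_le.mp (hC ω)).2⟩

theorem essSet_nonempty (hemp : ∅ ∈ 𝒩) (f : BddFns Ω) : (essSet 𝒩 f).Nonempty :=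
  ⟨_, ∅, hemp, rfl⟩

theorem essSet_bddBelow (hU : Set.univ ∉ 𝒩) (f : BddFns Ω) : BddBelow (essSet 𝒩 f) := by
  obtain ⟨C, hC⟩ := f.2
  refine ⟨-C, ?_⟩
  rintro r ⟨N, hN, rfl⟩
  obtain ⟨ω, hω⟩ := hNc hU hN
  exact le_trans (neg_le_of_abs_le (hC ω)) (le_csSup (bdd_img f _) ⟨ω, hω, rfl⟩)

theorem ess_le (hU : Set.univ ∉ 𝒩) (f : BddFns Ω) {N : Set Ω} (hN : N ∈ 𝒩) :
    ess 𝒩 f ≤ sSup (f.1 '' Nᶜ) := csInf_le (essSet_bddBelow hU f) ⟨N, hN, rfl⟩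

theorem le_ess (hemp : ∅ ∈ 𝒩) (f : BddFns Ω) {c : ℝ}
    (hc : ∀ N ∈ 𝒩, c ≤ sSup (f.1 '' Nᶜ)) : c ≤ ess 𝒩 f := by
  refine le_csInf (essSet_nonempty hemp f) ?_
  rintro r ⟨N, hN, rfl⟩
  exact hc N hN

theorem ess_le_of_pointwise (hemp : ∅ ∈ 𝒩) (hU : Set.univ ∉ 𝒩) (f : BddFns Ω) {a : ℝ}
    (ha : ∀ ω, f.1 ω ≤ a) : ess 𝒩 f ≤ a := by
  refine le_trans (ess_le hU f hemp) ?_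
  rw [Set.compl_empty]
  refine csSup_le (Set.image_nonempty.mpr Set.univ_nonempty) ?_
  rintro x ⟨ω, -, rfl⟩
  exact ha ω

theorem le_ess_of_pointwise (hemp : ∅ ∈ 𝒩) (hU : Set.univ ∉ 𝒩) (f : BddFns Ω) {a : ℝ}
    (ha : ∀ ω, a ≤ f.1 ω) : a ≤ ess 𝒩 f := by
  refine le_ess hemp f fun N hN => ?_
  obtain ⟨ω, hω⟩ := hNc hU hN
  exact le_trans (ha ω) (le_csSup (bdd_img f _) ⟨ω, hω, rfl⟩)

theorem ess_add (hemp : ∅ ∈ 𝒩) (hU : Set.univ ∉ 𝒩)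
    (hcup : ∀ A ∈ 𝒩, ∀ B ∈ 𝒩, A ∪ B ∈ 𝒩) (f g : BddFns Ω) :
    ess 𝒩 (f + g) ≤ ess 𝒩 f + ess 𝒩 g := by
  refine le_of_forall_pos_le_add fun ε hε => ?_
  obtain ⟨r1, ⟨N1, hN1, rfl⟩, hr1⟩ :=
    Real.lt_sInf_add_pos (essSet_nonempty hemp f) (half_pos hε)
  obtain ⟨r2, ⟨N2, hN2, rfl⟩, hr2⟩ :=
    Real.lt_sInf_add_pos (essSet_nonempty hemp g) (half_pos hε)
  have hN : N1 ∪ N2 ∈ 𝒩 := hcup _ hN1 _ hN2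
  have key : sSup ((f + g).1 '' (N1 ∪ N2)ᶜ) ≤
      sSup (f.1 '' N1ᶜ) + sSup (g.1 '' N2ᶜ) := by
    refine csSup_le (Set.image_nonempty.mpr (hNc hU hN)) ?_
    rintro x ⟨ω, hω, rfl⟩
    rw [Set.compl_union] at hω
    have h1 : f.1 ω ≤ sSup (f.1 '' N1ᶜ) := le_csSup (bdd_img f _) ⟨ω, hω.1, rfl⟩
    have h2 : g.1 ω ≤ sSup (g.1 '' N2ᶜ) := le_csSup (bdd_img g _) ⟨ω, hω.2, rfl⟩
    have : (f + g).1 ω = f.1 ω + g.1 ω := rfl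
    rw [this]; linarith
  have := le_trans (ess_le hU (f + g) hN) key
  have h3 : ess 𝒩 f = sInf (essSet 𝒩 f) := rfl
  have h4 : ess 𝒩 g = sInf (essSet 𝒩 g) := rfl
  linarith

open Pointwise in
theorem ess_smul {c : ℝ} (hc : 0 < c) (f : BddFns Ω) :
    ess 𝒩 (c • f) = c * ess 𝒩 f := by
  have hset : essSet 𝒩 (c • f) = c • essSet 𝒩 f := by
    ext r
    constructor
    · rintro ⟨N, hN, rfl⟩
      refine ⟨sSup (f.1 '' Nᶜ), ⟨N, hN, rfl⟩, ?_⟩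
      have himg : (c • f).1 '' Nᶜ = c • (f.1 '' Nᶜ) := by
        ext x
        simp only [Set.mem_image, Set.mem_smul_set]
        constructor
        · rintro ⟨ω, hω, rfl⟩; exact ⟨f.1 ω, ⟨ω, hω, rfl⟩, rfl⟩
        · rintro ⟨y, ⟨ω, hω, rfl⟩, rfl⟩; exact ⟨ω, hω, rfl⟩
      rw [himg, Real.sSup_smul_of_nonneg hc.le]
    · rintro ⟨r, ⟨N, hN, rfl⟩, rfl⟩
      refine ⟨N, hN, ?_⟩
      have himg : (c • f).1 '' Nᶜ = c • (f.1 '' Nᶜ) := by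
        ext x
        simp only [Set.mem_image, Set.mem_smul_set]
        constructor
        · rintro ⟨ω, hω, rfl⟩; exact ⟨f.1 ω, ⟨ω, hω, rfl⟩, rfl⟩
        · rintro ⟨y, ⟨ω, hω, rfl⟩, rfl⟩; exact ⟨ω, hω, rfl⟩
      rw [himg, Real.sSup_smul_of_nonneg hc.le]
  rw [ess, hset, Real.sInf_smul_of_nonneg hc.le]
  rfl

end NullIdealAux

namespace NullIdealAux

variable {Ω : Type*}

noncomputable def wsumF (L : List (ℝ × Set Ω)) : BddFns Ω :=
  (L.map fun x => x.1 • indF x.2).sum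

theorem wsumF_nil : wsumF ([] : List (ℝ × Set Ω)) = 0 := rfl

theorem wsumF_cons (x : ℝ × Set Ω) (L : List (ℝ × Set Ω)) :
    wsumF (x :: L) = x.1 • indF x.2 + wsumF L := by simp [wsumF]

theorem wsumF_apply (L : List (ℝ × Set Ω)) (ω : Ω) :
    (wsumF L).1 ω = (L.map fun x => x.1 * x.2.indicator (fun _ => (1:ℝ)) ω).sum := by
  induction L with
  | nil => simp [wsumF_nil]
  | cons x L ih =>
    rw [wsumF_cons, List.map_cons, List.sum_cons, ← ih]
    rfl

theorem list_sum_le {α : Type*} (L : List α) (f g : α → ℝ) (h : ∀ x ∈ L, f x ≤ g x) :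
    (L.map f).sum ≤ (L.map g).sum := by
  induction L with
  | nil => simp
  | cons x L ih =>
    simp only [List.map_cons, List.sum_cons]
    exact add_le_add (h x (List.mem_cons_self))
      (ih fun y hy => h y (List.mem_cons_of_mem _ hy))

theorem list_sum_mul {α : Type*} (L : List α) (c : ℝ) (f : α → ℝ) :
    (L.map fun x => c * f x).sum = c * (L.map f).sum := by
  induction L with
  | nil => simp
  | cons x L ih => simp only [List.map_cons, List.sum_cons, ih]; ring

theorem list_sum_add {α : Type*} (L : List α) (f g : α → ℝ) :
    (L.map fun x => f x + g x).sum = (L.map f).sum + (L.map g).sum := by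
  induction L with
  | nil => simp
  | cons x L ih => simp only [List.map_cons, List.sum_cons, ih]; ring

theorem cnt_append (l₁ l₂ : List (Set Ω)) (ω : Ω) :
    cnt (l₁ ++ l₂) ω = cnt l₁ ω + cnt l₂ ω := by simp [cnt]

theorem cnt_replicate (n : ℕ) (B : Set Ω) (ω : Ω) :
    cnt (List.replicate n B) ω = n * B.indicator (fun _ => (1:ℝ)) ω := by
  simp [cnt, List.map_replicate, List.sum_replicate, nsmul_eq_mul]

theorem cnt_bind {α : Type*} (L : List α) (g : α → List (Set Ω)) (ω : Ω) :
    cnt (L.flatMap g) ω = (L.map fun x => cnt (g x) ω).sum := by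
  induction L with
  | nil => simp [cnt]
  | cons x L ih => rw [List.flatMap_cons, cnt_append, ih, List.map_cons, List.sum_cons]

theorem length_bind {α : Type*} (L : List α) (g : α → List (Set Ω)) :
    (L.flatMap g).length = (L.map fun x => (g x).length).sum := by
  induction L with
  | nil => simp
  | cons x L ih => rw [List.flatMap_cons, List.length_append, ih, List.map_cons, List.sum_cons]

variable [Nonempty Ω] {𝒩 𝓑 : Set (Set Ω)}

theorem interNumSet_bddBelow (hU : Set.univ ∉ 𝒩) :
    ∀ r ∈ {r | ∃ β : List (Set Ω), β ≠ [] ∧ (∀ B ∈ β, B ∈ 𝓑) ∧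
      ∃ N ∈ 𝒩, r = sSup (sFun β '' Nᶜ)}, 0 ≤ r := by
  rintro r ⟨β, hne, hβ, N, hN, rfl⟩
  obtain ⟨ω, hω⟩ := hNc hU hN
  refine le_trans (sFun_nonneg β ω) (le_csSup ⟨1, ?_⟩ ⟨ω, hω, rfl⟩)
  rintro x ⟨ω', -, rfl⟩
  exact sFun_le_one β ω'

theorem interNum_nonneg (hU : Set.univ ∉ 𝒩) : 0 ≤ interNumIdeal 𝒩 𝓑 :=
  Real.sInf_nonneg (interNumSet_bddBelow hU)

theorem interNum_le (hU : Set.univ ∉ 𝒩) {β : List (Set Ω)} (hne : β ≠ [])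
    (hβ : ∀ B ∈ β, B ∈ 𝓑) {N : Set Ω} (hN : N ∈ 𝒩) :
    interNumIdeal 𝒩 𝓑 ≤ sSup (sFun β '' Nᶜ) :=
  csInf_le ⟨0, fun r hr => interNumSet_bddBelow hU r hr⟩ ⟨β, hne, hβ, N, hN, rfl⟩

theorem wsum_bound (hU : Set.univ ∉ 𝒩) (L : List (ℝ × Set Ω))
    (hL : ∀ x ∈ L, 0 ≤ x.1 ∧ x.2 ∈ 𝓑) {N : Set Ω} (hN : N ∈ 𝒩) :
    interNumIdeal 𝒩 𝓑 * (L.map Prod.fst).sum ≤ sSup ((wsumF L).1 '' Nᶜ) := by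
  set I := interNumIdeal 𝒩 𝓑 with hIdef
  set T := (L.map Prod.fst).sum with hTdef
  set S := sSup ((wsumF L).1 '' Nᶜ) with hSdef
  have hI0 : 0 ≤ I := interNum_nonneg hU
  obtain ⟨ω₀, hω₀⟩ := hNc hU hN
  have hSmem : ∀ ω ∈ (Nᶜ : Set Ω), (wsumF L).1 ω ≤ S := fun ω hω =>
    le_csSup (bdd_img _ _) ⟨ω, hω, rfl⟩
  by_cases hpos : ∃ x ∈ L, 0 < x.1
  · obtain ⟨x₀, hx₀L, hx₀⟩ := hpos
    -- main estimate for each n ≥ 1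
    have key : ∀ n : ℕ, 1 ≤ n → I * T ≤ S + L.length / n := by
      intro n hn
      have hn0 : (0:ℝ) < n := by exact_mod_cast hn
      set βn := L.flatMap fun x => List.replicate ⌈(n:ℝ) * x.1⌉₊ x.2 with hβn
      have hx₀mem : x₀.2 ∈ βn := by
        rw [hβn, List.mem_flatMap]
        exact ⟨x₀, hx₀L, List.mem_replicate.mpr
          ⟨(Nat.ceil_pos.mpr (by positivity)).ne', rfl⟩⟩
      have hne : βn ≠ [] := List.ne_nil_of_mem hx₀mem
      have hmem : ∀ B ∈ βn, B ∈ 𝓑 := by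
        intro B hB
        rw [hβn, List.mem_flatMap] at hB
        obtain ⟨x, hx, hB⟩ := hB
        rw [List.mem_replicate] at hB
        exact hB.2 ▸ (hL x hx).2
      have hk : 0 < βn.length := List.length_pos_iff.mpr hne
      have hkR : (0:ℝ) < βn.length := by exact_mod_cast hk
      have hkT : (n:ℝ) * T ≤ βn.length := by
        have h1 : βn.length = (L.map fun x => ⌈(n:ℝ) * x.1⌉₊).sum := by
          rw [hβn, length_bind]
          simp
        rw [h1, Nat.cast_list_sum, List.map_map, hTdef, ← list_sum_mul]
        refine list_sum_le L _ _ fun x hx => ?_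
        simpa using Nat.le_ceil ((n:ℝ) * x.1)
      have hcnt : ∀ ω, cnt βn ω ≤ n * (wsumF L).1 ω + L.length := by
        intro ω
        rw [hβn, cnt_bind]
        have hle : (L.map fun x => cnt (List.replicate ⌈(n:ℝ) * x.1⌉₊ x.2) ω).sum ≤
            (L.map fun x => (n:ℝ) * (x.1 * x.2.indicator (fun _ => (1:ℝ)) ω) + 1).sum := by
          refine list_sum_le L _ _ fun x hx => ?_
          rw [cnt_replicate]
          have hind0 : 0 ≤ x.2.indicator (fun _ => (1:ℝ)) ω := Set.indicator_nonneg (by simp) ω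
          have hind1 : x.2.indicator (fun _ => (1:ℝ)) ω ≤ 1 := by
            by_cases hω : ω ∈ x.2 <;> simp [hω]
          have hceil : (⌈(n:ℝ) * x.1⌉₊ : ℝ) ≤ n * x.1 + 1 :=
            le_of_lt (Nat.ceil_lt_add_one (mul_nonneg hn0.le (hL x hx).1))
          nlinarith [(hL x hx).1]
        refine le_trans hle ?_
        rw [list_sum_add, list_sum_mul, wsumF_apply]
        simp
      have hsup : sSup (sFun βn '' Nᶜ) ≤ ((n:ℝ) * S + L.length) / βn.length := by
        refine csSup_le (Set.image_nonempty.mpr (hNc hU hN)) ?_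
        rintro x ⟨ω, hω, rfl⟩
        rw [sFun_eq]
        have hnum : cnt βn ω ≤ (n:ℝ) * S + L.length := by
          refine le_trans (hcnt ω) ?_
          have := hSmem ω hω
          nlinarith
        gcongr
      have hI : I ≤ ((n:ℝ) * S + L.length) / βn.length :=
        le_trans (interNum_le hU hne hmem hN) hsup
      rw [le_div_iff₀ hkR] at hI
      have h1 : I * ((n:ℝ) * T) ≤ I * βn.length := by nlinarith
      have h2 : I * ((n:ℝ) * T) ≤ (n:ℝ) * S + L.length := le_trans h1 hI
      have h3 : (I * T) * n ≤ (S + (L.length:ℝ) / n) * n := by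
        have h4 : ((L.length:ℝ) / n) * n = L.length := div_mul_cancel₀ _ hn0.ne'
        nlinarith
      exact le_of_mul_le_mul_right h3 hn0
    by_contra hcon
    push_neg at hcon
    set δ := I * T - S with hδ
    have hδ0 : 0 < δ := by rw [hδ]; linarith
    obtain ⟨n, hngt⟩ := exists_nat_gt (max 1 (L.length / δ))
    have hn1 : 1 ≤ n := by
      have := le_max_left 1 (L.length / δ)
      have : (1:ℝ) < n := lt_of_le_of_lt (le_max_left _ _) hngt
      exact_mod_cast this.le
    have := key n hn1
    have hn0 : (0:ℝ) < n := by exact_mod_cast hn1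
    have hlt : L.length / δ < n := lt_of_le_of_lt (le_max_right _ _) hngt
    rw [div_lt_iff₀ hδ0] at hlt
    have : (L.length : ℝ) / n < δ := by rw [div_lt_iff₀ hn0]; nlinarith
    linarith
  · -- all weights are zero
    push_neg at hpos
    have hz : ∀ x ∈ L, x.1 = 0 := fun x hx => le_antisymm (hpos x hx) (hL x hx).1
    have hT : T = 0 := by
      rw [hTdef]
      refine List.sum_eq_zero ?_
      rintro t ht
      rw [List.mem_map] at ht
      obtain ⟨x, hx, rfl⟩ := ht
      exact hz x hx
    have hw : (wsumF L).1 ω₀ = 0 := by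
      rw [wsumF_apply]
      refine List.sum_eq_zero ?_
      rintro t ht
      rw [List.mem_map] at ht
      obtain ⟨x, hx, rfl⟩ := ht
      rw [hz x hx]; ring
    have : (0:ℝ) ≤ S := hw ▸ hSmem ω₀ hω₀
    rw [hT]
    linarith

end NullIdealAux

namespace NullIdealAux

open Pointwise

variable {Ω : Type*} [Nonempty Ω] {𝒩 𝓑 : Set (Set Ω)}

def kqSet (𝒩 𝓑 : Set (Set Ω)) (f : BddFns Ω) : Set ℝ :=
  {r | ∃ L : List (ℝ × Set Ω), (∀ x ∈ L, 0 ≤ x.1 ∧ x.2 ∈ 𝓑) ∧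
    r = ess 𝒩 (f + wsumF L) - (L.map Prod.fst).sum * interNumIdeal 𝒩 𝓑}

noncomputable def kq (𝒩 𝓑 : Set (Set Ω)) (f : BddFns Ω) : ℝ := sInf (kqSet 𝒩 𝓑 f)

theorem wsumF_append (L₁ L₂ : List (ℝ × Set Ω)) :
    wsumF (L₁ ++ L₂) = wsumF L₁ + wsumF L₂ := by
  simp [wsumF]

theorem wsumF_smulL (c : ℝ) (L : List (ℝ × Set Ω)) :
    wsumF (L.map fun x => (c * x.1, x.2)) = c • wsumF L := by
  induction L with
  | nil => simp [wsumF_nil]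
  | cons x L ih =>
    rw [List.map_cons, wsumF_cons, wsumF_cons, ih, smul_add, smul_smul]

theorem fstsum_smulL (c : ℝ) (L : List (ℝ × Set Ω)) :
    ((L.map fun x => (c * x.1, x.2)).map Prod.fst).sum = c * (L.map Prod.fst).sum := by
  rw [List.map_map, ← list_sum_mul]
  rfl

theorem ess_wsum_ge (hemp : ∅ ∈ 𝒩) (hU : Set.univ ∉ 𝒩) (L : List (ℝ × Set Ω))
    (hL : ∀ x ∈ L, 0 ≤ x.1 ∧ x.2 ∈ 𝓑) :
    interNumIdeal 𝒩 𝓑 * (L.map Prod.fst).sum ≤ ess 𝒩 (wsumF L) :=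
  le_ess hemp _ fun N hN => wsum_bound hU L hL hN

theorem kqSet_nonempty (f : BddFns Ω) : (kqSet 𝒩 𝓑 f).Nonempty :=
  ⟨_, [], by simp, rfl⟩

theorem kqSet_lb (hemp : ∅ ∈ 𝒩) (hU : Set.univ ∉ 𝒩)
    (hcup : ∀ A ∈ 𝒩, ∀ B ∈ 𝒩, A ∪ B ∈ 𝒩) (f : BddFns Ω) :
    ∀ r ∈ kqSet 𝒩 𝓑 f, -(ess 𝒩 (-f)) ≤ r := by
  rintro r ⟨L, hL, rfl⟩
  have h1 : ess 𝒩 (wsumF L) ≤ ess 𝒩 (f + wsumF L) + ess 𝒩 (-f) := by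
    have := ess_add hemp hU hcup (f + wsumF L) (-f)
    have heq : f + wsumF L + -f = wsumF L := by abel
    rwa [heq] at this
  have h2 := ess_wsum_ge hemp hU L hL
  linarith

theorem kq_le_ess (hemp : ∅ ∈ 𝒩) (hU : Set.univ ∉ 𝒩)
    (hcup : ∀ A ∈ 𝒩, ∀ B ∈ 𝒩, A ∪ B ∈ 𝒩) (f : BddFns Ω) :
    kq 𝒩 𝓑 f ≤ ess 𝒩 f := by
  have := csInf_le ⟨-(ess 𝒩 (-f)), fun r hr => kqSet_lb hemp hU hcup f r hr⟩
    (show ess 𝒩 f - 0 * interNumIdeal 𝒩 𝓑 ∈ kqSet 𝒩 𝓑 f from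
      ⟨[], by simp, by rw [wsumF_nil, add_zero]; simp⟩)
  simpa [kq] using this

theorem kq_add (hemp : ∅ ∈ 𝒩) (hU : Set.univ ∉ 𝒩)
    (hcup : ∀ A ∈ 𝒩, ∀ B ∈ 𝒩, A ∪ B ∈ 𝒩) (f g : BddFns Ω) :
    kq 𝒩 𝓑 (f + g) ≤ kq 𝒩 𝓑 f + kq 𝒩 𝓑 g := by
  refine le_of_forall_pos_le_add fun ε hε => ?_
  obtain ⟨r1, ⟨L1, hL1, rfl⟩, hr1⟩ :=
    Real.lt_sInf_add_pos (kqSet_nonempty (𝓑 := 𝓑) f) (half_pos hε)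
  obtain ⟨r2, ⟨L2, hL2, rfl⟩, hr2⟩ :=
    Real.lt_sInf_add_pos (kqSet_nonempty (𝓑 := 𝓑) g) (half_pos hε)
  have hmem : ess 𝒩 (f + g + wsumF (L1 ++ L2)) -
      ((L1 ++ L2).map Prod.fst).sum * interNumIdeal 𝒩 𝓑 ∈ kqSet 𝒩 𝓑 (f + g) := by
    refine ⟨L1 ++ L2, fun x hx => ?_, rfl⟩
    rcases List.mem_append.mp hx with h | h
    · exact hL1 x h
    · exact hL2 x h
  have hle := csInf_le ⟨-(ess 𝒩 (-(f+g))), fun r hr => kqSet_lb hemp hU hcup _ r hr⟩ hmem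
  have heq : f + g + wsumF (L1 ++ L2) = (f + wsumF L1) + (g + wsumF L2) := by
    rw [wsumF_append]; abel
  have hsum : ((L1 ++ L2).map Prod.fst).sum =
      (L1.map Prod.fst).sum + (L2.map Prod.fst).sum := by
    rw [List.map_append, List.sum_append]
  have hesss := ess_add hemp hU hcup (f + wsumF L1) (g + wsumF L2)
  rw [heq, hsum] at hle
  have : kq 𝒩 𝓑 (f+g) ≤ ess 𝒩 (f + wsumF L1) + ess 𝒩 (g + wsumF L2)
      - ((L1.map Prod.fst).sum + (L2.map Prod.fst).sum) * interNumIdeal 𝒩 𝓑 :=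
    le_trans hle (by linarith)
  have e1 : ess 𝒩 (f + wsumF L1) < sInf (kqSet 𝒩 𝓑 f)
      + (L1.map Prod.fst).sum * interNumIdeal 𝒩 𝓑 + ε/2 := by linarith
  have e2 : ess 𝒩 (g + wsumF L2) < sInf (kqSet 𝒩 𝓑 g)
      + (L2.map Prod.fst).sum * interNumIdeal 𝒩 𝓑 + ε/2 := by linarith
  have : kq 𝒩 𝓑 f = sInf (kqSet 𝒩 𝓑 f) := rfl
  have : kq 𝒩 𝓑 g = sInf (kqSet 𝒩 𝓑 g) := rfl
  calc kq 𝒩 𝓑 (f+g) ≤ _ := ‹kq 𝒩 𝓑 (f+g) ≤ _›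
    _ ≤ kq 𝒩 𝓑 f + kq 𝒩 𝓑 g + ε := by
        show _ - _ ≤ _
        have hh : ε/2 + ε/2 = ε := by ring
        rw [kq, kq]
        linarith

theorem kqSet_smul_mem {c : ℝ} (hc : 0 < c) (f : BddFns Ω) {r : ℝ}
    (hr : r ∈ kqSet 𝒩 𝓑 f) : c * r ∈ kqSet 𝒩 𝓑 (c • f) := by
  obtain ⟨L, hL, rfl⟩ := hr
  refine ⟨L.map fun x => (c * x.1, x.2), fun x hx => ?_, ?_⟩
  · rw [List.mem_map] at hx
    obtain ⟨y, hy, rfl⟩ := hx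
    exact ⟨mul_nonneg hc.le (hL y hy).1, (hL y hy).2⟩
  · rw [wsumF_smulL, fstsum_smulL, ← smul_add, ess_smul hc]
    ring

theorem kq_smul {c : ℝ} (hc : 0 < c) (f : BddFns Ω) :
    kq 𝒩 𝓑 (c • f) = c * kq 𝒩 𝓑 f := by
  have hset : kqSet 𝒩 𝓑 (c • f) = c • kqSet 𝒩 𝓑 f := by
    ext r
    constructor
    · intro hr
      have h2 := kqSet_smul_mem (inv_pos.mpr hc) (c • f) hr
      rw [smul_smul, inv_mul_cancel₀ hc.ne', one_smul] at h2
      exact ⟨c⁻¹ * r, h2, mul_inv_cancel_left₀ hc.ne' r⟩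
    · rintro ⟨s, hs, rfl⟩
      exact kqSet_smul_mem hc f hs
  rw [kq, hset, Real.sInf_smul_of_nonneg hc.le]
  rfl

theorem kq_zero_nonneg (hemp : ∅ ∈ 𝒩) (hU : Set.univ ∉ 𝒩) :
    0 ≤ kq 𝒩 𝓑 (0 : BddFns Ω) := by
  refine le_csInf (kqSet_nonempty 0) ?_
  rintro r ⟨L, hL, rfl⟩
  rw [zero_add]
  have := ess_wsum_ge hemp hU L hL
  linarith

theorem ess_zero (hemp : ∅ ∈ 𝒩) (hU : Set.univ ∉ 𝒩) : ess 𝒩 (0 : BddFns Ω) = 0 := by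
  refine le_antisymm (ess_le_of_pointwise hemp hU 0 fun ω => le_refl 0)
    (le_ess_of_pointwise hemp hU 0 fun ω => le_refl 0)

theorem kq_neg_indF (hemp : ∅ ∈ 𝒩) (hU : Set.univ ∉ 𝒩)
    (hcup : ∀ A ∈ 𝒩, ∀ B ∈ 𝒩, A ∪ B ∈ 𝒩) {B : Set Ω} (hB : B ∈ 𝓑) :
    kq 𝒩 𝓑 (-(indF B)) ≤ -(interNumIdeal 𝒩 𝓑) := by
  have hmem : ess 𝒩 (-(indF B) + wsumF [((1:ℝ), B)]) -
      (([((1:ℝ), B)].map Prod.fst).sum) * interNumIdeal 𝒩 𝓑 ∈ kqSet 𝒩 𝓑 (-(indF B)) := by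
    refine ⟨[((1:ℝ), B)], ?_, rfl⟩
    rintro x hx
    rw [List.mem_singleton] at hx
    subst hx
    exact ⟨zero_le_one, hB⟩
  have heq : -(indF B) + wsumF [((1:ℝ), B)] = 0 := by
    rw [show wsumF [((1:ℝ), B)] = (1:ℝ) • indF B + wsumF [] from wsumF_cons _ _,
      wsumF_nil, add_zero, one_smul]
    abel
  rw [heq, ess_zero hemp hU] at hmem
  have := csInf_le ⟨-(ess 𝒩 (-(-(indF B)))), fun r hr => kqSet_lb hemp hU hcup _ r hr⟩ hmem
  simpa [kq] using this

theorem kelley_measure (hemp : ∅ ∈ 𝒩) (hU : Set.univ ∉ 𝒩)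
    (hcup : ∀ A ∈ 𝒩, ∀ B ∈ 𝒩, A ∪ B ∈ 𝒩) (𝓑 : Set (Set Ω)) :
    ∃ μ : Set Ω → ℝ, (∀ A, 0 ≤ μ A) ∧ (∀ A, μ A ≤ 1) ∧ μ Set.univ = 1 ∧
      (∀ A B : Set Ω, Disjoint A B → μ (A ∪ B) = μ A + μ B) ∧
      (∀ N ∈ 𝒩, μ N = 0) ∧ (∀ B ∈ 𝓑, interNumIdeal 𝒩 𝓑 ≤ μ B) := by
  obtain ⟨g, -, hg⟩ := exists_extension_of_le_sublinear
    ((0 : BddFns Ω →ₗ[ℝ] ℝ).toPMap ⊥) (kq 𝒩 𝓑)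
    (fun c hc x => kq_smul hc x)
    (fun x y => kq_add hemp hU hcup x y)
    (by
      rintro ⟨x, hx⟩
      have hx0 : x = 0 := Submodule.mem_bot ℝ |>.mp hx
      subst hx0
      simpa using kq_zero_nonneg (𝓑 := 𝓑) hemp hU)
  have hle : ∀ f : BddFns Ω, g f ≤ ess 𝒩 f := fun f =>
    le_trans (hg f) (kq_le_ess hemp hU hcup f)
  refine ⟨fun A => g (indF A), ?_, ?_, ?_, ?_, ?_, ?_⟩
  · intro A
    have : g (-(indF A)) ≤ ess 𝒩 (-(indF A)) := hle _
    have h0 : ess 𝒩 (-(indF A)) ≤ 0 := by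
      refine ess_le_of_pointwise hemp hU _ fun ω => ?_
      have : (-(indF A)).1 ω = -(A.indicator (fun _ => (1:ℝ)) ω) := rfl
      rw [this]
      simp [Set.indicator_nonneg (fun _ _ => zero_le_one) ω]
    rw [map_neg] at this
    linarith
  · intro A
    have : g (indF A) ≤ ess 𝒩 (indF A) := hle _
    have h0 : ess 𝒩 (indF A) ≤ 1 := by
      refine ess_le_of_pointwise hemp hU _ fun ω => ?_
      by_cases hω : ω ∈ A <;> simp [indF, hω]
    linarith
  · have h1 : g (indF Set.univ) ≤ 1 := by
      refine le_trans (hle _) (ess_le_of_pointwise hemp hU _ fun ω => ?_)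
      simp [indF]
    have h2 : g (-(indF Set.univ)) ≤ -1 := by
      refine le_trans (hle _) (ess_le_of_pointwise hemp hU _ fun ω => ?_)
      have : (-(indF Set.univ)).1 ω = -(Set.univ.indicator (fun _ => (1:ℝ)) ω) := rfl
      rw [this]
      simp
    rw [map_neg] at h2
    linarith
  · intro A B hAB
    have heq : indF (A ∪ B) = indF A + indF B := by
      apply Subtype.ext
      have : (indF A + indF B).1 = (indF A).1 + (indF B).1 := rfl
      rw [this]
      exact Set.indicator_union_of_disjoint hAB _
    show g (indF (A ∪ B)) = g (indF A) + g (indF B)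
    rw [heq, map_add]
  · intro N hN
    have h1 : ess 𝒩 (indF N) ≤ 0 := by
      refine le_trans (ess_le hU _ hN) ?_
      refine csSup_le (Set.image_nonempty.mpr (hNc hU hN)) ?_
      rintro x ⟨ω, hω, rfl⟩
      have h3 : (indF N).1 ω = N.indicator (fun _ => (1:ℝ)) ω := rfl
      rw [h3, Set.indicator_of_notMem hω]
    have h2 : ess 𝒩 (-(indF N)) ≤ 0 := by
      refine ess_le_of_pointwise hemp hU _ fun ω => ?_
      have : (-(indF N)).1 ω = -(N.indicator (fun _ => (1:ℝ)) ω) := rfl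
      rw [this]
      simp [Set.indicator_nonneg (fun _ _ => zero_le_one) ω]
    have g1 := le_trans (hle (indF N)) h1
    have g2 := le_trans (hle (-(indF N))) h2
    rw [map_neg] at g2
    linarith
  · intro B hB
    have := le_trans (hg (-(indF B))) (kq_neg_indF hemp hU hcup hB)
    rw [map_neg] at this
    linarith

end NullIdealAux

namespace NullIdealAux

variable {Ω : Type*} [Nonempty Ω] {𝒜 𝒩 : Set (Set Ω)}

theorem backward_dir (hI : IsIdealIn 𝒜 𝒩) (hU : Set.univ ∉ 𝒩) (𝓑 : ℕ → Set (Set Ω))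
    (hpos : ∀ n, 0 < interNumIdeal 𝒩 (𝓑 n)) (hcov : 𝒜 = 𝒩 ∪ ⋃ n, 𝓑 n) :
    ∃ m : Set Ω → ℝ, IsFAProb 𝒜 m ∧ 𝒩 = {A ∈ 𝒜 | m A = 0} := by
  have hemp : ∅ ∈ 𝒩 := hI.2.1
  have hcup : ∀ A ∈ 𝒩, ∀ B ∈ 𝒩, A ∪ B ∈ 𝒩 := hI.2.2.1
  choose μ hμ0 hμ1 hμu hμadd hμN hμB using
    fun n => kelley_measure hemp hU hcup (𝓑 n)
  set m : Set Ω → ℝ := fun A => ∑' n : ℕ, (1/2:ℝ)^(n+1) * μ n A with hm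
  have hterm_nonneg : ∀ A n, 0 ≤ (1/2:ℝ)^(n+1) * μ n A := fun A n =>
    mul_nonneg (by positivity) (hμ0 n A)
  have hgeo : Summable fun n : ℕ => (1/2:ℝ)^(n+1) := by
    refine Summable.congr (summable_geometric_two.mul_left (1/2)) fun n => ?_
    rw [← pow_succ']
  have hsum : ∀ A, Summable fun n : ℕ => (1/2:ℝ)^(n+1) * μ n A := by
    intro A
    refine Summable.of_nonneg_of_le (hterm_nonneg A) (fun n => ?_) hgeo
    exact mul_le_of_le_one_right (by positivity) (hμ1 n A)
  have hm_nonneg : ∀ A, 0 ≤ m A := fun A => tsum_nonneg (hterm_nonneg A)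
  have hm_univ : m Set.univ = 1 := by
    have h1 : ∀ n : ℕ, (1/2:ℝ)^(n+1) * μ n Set.univ = 1 / 2 / 2^n := by
      intro n
      rw [hμu n]
      rw [mul_one, pow_succ']
      rw [div_pow, one_pow]
      ring
    rw [hm]
    simp only [h1]
    exact tsum_geometric_two' 1
  have hm_add : ∀ A B : Set Ω, Disjoint A B → m (A ∪ B) = m A + m B := by
    intro A B hAB
    rw [hm]
    simp only
    have h1 : ∀ n : ℕ, (1/2:ℝ)^(n+1) * μ n (A ∪ B) =
        (1/2:ℝ)^(n+1) * μ n A + (1/2:ℝ)^(n+1) * μ n B := by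
      intro n
      rw [hμadd n A B hAB]
      ring
    rw [tsum_congr h1, Summable.tsum_add (hsum A) (hsum B)]
  refine ⟨m, ⟨fun A _ => hm_nonneg A, hm_univ, fun A _ B _ hAB => hm_add A B hAB⟩, ?_⟩
  ext A
  simp only [Set.mem_setOf_eq]
  constructor
  · intro hA
    refine ⟨hI.1 hA, ?_⟩
    have h0 : ∀ n : ℕ, (1/2:ℝ)^(n+1) * μ n A = 0 := by
      intro n
      rw [hμN n A hA, mul_zero]
    rw [hm]
    simp only
    rw [tsum_congr h0, tsum_zero]
  · rintro ⟨hA𝒜, hA0⟩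
    have := hcov ▸ hA𝒜
    rcases this with hA | hA
    · exact hA
    · exfalso
      rw [Set.mem_iUnion] at hA
      obtain ⟨n, hAn⟩ := hA
      have h1 : 0 < (1/2:ℝ)^(n+1) * μ n A := by
        have := lt_of_lt_of_le (hpos n) (hμB n A hAn)
        positivity
      have h2 : (1/2:ℝ)^(n+1) * μ n A ≤ m A :=
        Summable.le_tsum (hsum A) n fun i _ => hterm_nonneg A i
      rw [hA0] at h2
      linarith

end NullIdealAux

/-- A family `𝒩 ⊆ 𝒜` is the family of null sets of some finitely additive
probability on `𝒜` iff it is a proper ideal and `𝒜 = 𝒩 ∪ ⋃ₙ 𝓑ₙ` with every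
`I_𝒩(𝓑ₙ) > 0`. -/
theorem null_ideal_characterization {Ω : Type*} [Nonempty Ω] (𝒜 𝒩 : Set (Set Ω))
    (h𝒜 : IsSetAlgebra 𝒜) (h𝒩𝒜 : 𝒩 ⊆ 𝒜) :
    (∃ m : Set Ω → ℝ, IsFAProb 𝒜 m ∧ 𝒩 = {A ∈ 𝒜 | m A = 0}) ↔
      (IsIdealIn 𝒜 𝒩 ∧ Set.univ ∉ 𝒩 ∧
        ∃ 𝓑 : ℕ → Set (Set Ω), (∀ n, 𝓑 n ⊆ 𝒜) ∧ (∀ n, 0 < interNumIdeal 𝒩 (𝓑 n)) ∧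
          𝒜 = 𝒩 ∪ ⋃ n, 𝓑 n) := by
  constructor
  · rintro ⟨m, hm, h𝒩⟩
    exact NullIdealAux.forward_dir h𝒜 hm h𝒩
  · rintro ⟨hI, hU, 𝓑, h𝓑, hpos, hcov⟩
    exact NullIdealAux.backward_dir hI hU 𝓑 hpos hcov
end

section
/- Let ≥_* be a preorder on ℝ^Ω satisfying conditions (i)–(v). If f ≥_* 0 and t > 0, then {ω : f(ω) < −t} ∈ 𝒩_*, i.e. 0 ≥_* 1_{{f < −t}}. -/
/-- A finitely additive probability on the algebra of all subsets of `Ω`. -/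
def IsFAProbAll {Ω : Type*} (m : Set Ω → ℝ) : Prop :=
  (∀ A : Set Ω, 0 ≤ m A) ∧ m Set.univ = 1 ∧
    ∀ A B : Set Ω, Disjoint A B → m (A ∪ B) = m A + m B

/-- `f ≥ g` `m`-almost surely: `inf_{t > 0} m({f - g < -t}) = 0`. -/
def AlmostGE {Ω : Type*} (m : Set Ω → ℝ) (f g : Ω → ℝ) : Prop :=
  sInf {r | ∃ t : ℝ, 0 < t ∧ r = m {ω | f ω - g ω < -t}} = 0

/-- `𝒩_* = {A ⊆ Ω : 0 ≥_* 1_A}`, the null sets of the ranking `R` (where `R f g`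
stands for `f ≥_* g`). -/
def NstarSet {Ω : Type*} (R : (Ω → ℝ) → (Ω → ℝ) → Prop) : Set (Set Ω) :=
  {A : Set Ω | R 0 (A.indicator fun _ => (1 : ℝ))}

/-- Conditions (i)–(v) on the ranking `R` (where `R f g` stands for `f ≥_* g`):
(i) not `0 >_* 1`; (ii) `f ≥_* 0` and `a > 0` imply `f ⊓ a ≥_* 0`;
(iii) `f ≥ 0` pointwise implies `f ≥_* 0`; (iv) `f ≥_* g` implies
`b·f + h ≥_* b·g + h` for every bounded pointwise-positive `b` and every `h`;
(v) if `f + ε ≥_* 0` for all `ε > 0` then `f ≥_* 0`. -/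
def StarConds {Ω : Type*} (R : (Ω → ℝ) → (Ω → ℝ) → Prop) : Prop :=
  (¬ (R 0 1 ∧ ¬ R 1 0)) ∧
    (∀ f : Ω → ℝ, ∀ a : ℝ, R f 0 → 0 < a → R (fun ω => min (f ω) a) 0) ∧
    (∀ f : Ω → ℝ, 0 ≤ f → R f 0) ∧
    (∀ f g b h : Ω → ℝ, R f g → (∀ ω, 0 < b ω) → (∃ C : ℝ, ∀ ω, b ω ≤ C) →
      R (b * f + h) (b * g + h)) ∧
    (∀ f : Ω → ℝ, (∀ ε : ℝ, 0 < ε → R (f + fun _ => ε) 0) → R f 0)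

/-- If `≥_*` satisfies (i)–(v), `f ≥_* 0` and `t > 0`, then `{f < -t} ∈ 𝒩_*`. -/
theorem sublevel_null {Ω : Type*} [Nonempty Ω] (R : (Ω → ℝ) → (Ω → ℝ) → Prop)
    (hrefl : Reflexive R) (htrans : Transitive R) (hc : StarConds R)
    (f : Ω → ℝ) (t : ℝ) (hf : R f 0) (ht : 0 < t) :
    {ω | f ω < -t} ∈ NstarSet R := by
  obtain ⟨hi, hii, hiii, hiv, hv⟩ := hc
  set A : Set Ω := {ω | f ω < -t} with hA
  set ind : Ω → ℝ := A.indicator (fun _ => (1 : ℝ)) with hind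
  have hcf : R (fun ω => f ω / t) 0 := by
    have h := hiv f 0 (fun _ => t⁻¹) 0 hf (fun ω => by positivity)
      ⟨t⁻¹, fun ω => le_rfl⟩
    have e1 : (fun _ : Ω => t⁻¹) * f + 0 = fun ω => f ω / t := by
      funext ω; simp [div_eq_mul_inv, mul_comm]
    have e2 : (fun _ : Ω => t⁻¹) * 0 + 0 = (0 : Ω → ℝ) := by
      funext ω; simp
    rwa [e1, e2] at h
  have hneg : R (fun ω => -ind ω) 0 := by
    apply hv
    intro ε hε
    set g : Ω → ℝ := fun ω => min (f ω / t) ε with hg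
    have hg0 : R g 0 := hii _ ε hcf hε
    have hpt : R (fun ω => (ε - ind ω) - g ω) 0 := by
      apply hiii
      intro ω
      by_cases hω : ω ∈ A
      · have hfω : f ω < -t := hω
        have h1 : f ω / t < -1 := by
          rw [div_lt_iff₀ ht]; linarith
        have h2 : g ω ≤ f ω / t := min_le_left _ _
        simp only [hind, Set.indicator_of_mem hω, Pi.zero_apply]
        linarith
      · have h2 : g ω ≤ ε := min_le_right _ _
        simp only [hind, Set.indicator_of_notMem hω, Pi.zero_apply]
        linarith
    have h := hiv _ 0 1 g hpt (fun ω => one_pos) ⟨1, fun ω => le_rfl⟩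
    have e1 : (1 : Ω → ℝ) * (fun ω => (ε - ind ω) - g ω) + g
        = fun ω => ε - ind ω := by funext ω; simp
    have e2 : (1 : Ω → ℝ) * 0 + g = g := by funext ω; simp
    rw [e1, e2] at h
    have h3 := htrans h hg0
    have e3 : ((fun ω => -ind ω) + fun _ => ε) = fun ω => ε - ind ω := by
      funext ω; simp; ring
    rwa [e3]
  have h := hiv _ 0 1 ind hneg (fun ω => one_pos) ⟨1, fun _ => le_rfl⟩
  have e1 : (1 : Ω → ℝ) * (fun ω => -ind ω) + ind = 0 := by funext ω; simp
  have e2 : (1 : Ω → ℝ) * 0 + ind = ind := by funext ω; simp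
  rw [e1, e2] at h
  exact h
end
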